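/- Let X be a Hausdorff topological space, let Y be a Polish space, and let p : X → Y be a perfect surjection, i.e., p is continuous, p is a closed map, and p⁻¹(K) is compact for every compact set K ⊆ Y. Then there exists a sequence of continuous functions f_n : X → [0,1] with f_0 ≥ f_1 ≥ f_2 ≥ ⋯ pointwise, converging pointwise to 0 on X, such that every closed set A ⊆ X on which the sequence (f_n) converges uniformly is compact. -/

import Mathlib

open Cardinal Filter

/-- If a Hausdorff space `X` admits a perfect surjection onto a Polish space, then there
is a pointwise decreasing sequence of continuous functions `fₙ : X → [0,1]` converging
pointwise to `0` such that every closed set on which the convergence is uniform is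
compact. -/
theorem stmt_16 (X : Type) [TopologicalSpace X] [T2Space X]
    (Y : Type) [TopologicalSpace Y] [PolishSpace Y]
    (p : X → Y) (hps : Function.Surjective p) (hpc : Continuous p)
    (hpcl : IsClosedMap p) (hpk : ∀ K : Set Y, IsCompact K → IsCompact (p ⁻¹' K)) :
    ∃ f : ℕ → X → ℝ,
      (∀ n, Continuous (f n)) ∧
      (∀ n x, f n x ∈ Set.Icc (0 : ℝ) 1) ∧
      (∀ n x, f (n + 1) x ≤ f n x) ∧
      (∀ x, Tendsto (fun n => f n x) atTop (nhds 0)) ∧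
      ∀ A : Set X, IsClosed A → TendstoUniformlyOn f (fun _ => 0) atTop A →
        IsCompact A := by
  letI := TopologicalSpace.upgradeIsCompletelyMetrizable Y
  rcases isEmpty_or_nonempty X with hX | hX
  · refine ⟨fun _ _ => 0, fun n => continuous_const, fun n x => ⟨le_rfl, zero_le_one⟩,
      fun n x => le_rfl, fun x => tendsto_const_nhds, fun A _ _ => A.toFinite.isCompact⟩
  · have hY : Nonempty Y := ⟨p (Classical.arbitrary X)⟩
    obtain ⟨s, hsc, hsd⟩ := TopologicalSpace.exists_countable_dense Y
    obtain ⟨u, rfl⟩ := hsc.exists_eq_range (hsd.nonempty)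
    set D : ℕ → Set Y := fun n => u '' Set.Iic n with hD
    have hDne : ∀ n, (D n).Nonempty := fun n => ⟨u 0, ⟨0, Nat.zero_le n, rfl⟩⟩
    have hDfin : ∀ n, (D n).Finite := fun n => (Set.finite_Iic n).image u
    refine ⟨fun n x => min 1 (Metric.infDist (p x) (D n)), ?_, ?_, ?_, ?_, ?_⟩
    · exact fun n =>
        continuous_const.min ((Metric.continuous_infDist_pt (D n)).comp hpc)
    · exact fun n x => ⟨le_min zero_le_one Metric.infDist_nonneg, min_le_left _ _⟩
    · intro n x
      refine min_le_min le_rfl ?_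
      exact Metric.infDist_le_infDist_of_subset
        (Set.image_mono (Set.Iic_subset_Iic.2 (Nat.le_succ n))) (hDne n)
    · intro x
      rw [Metric.tendsto_atTop]
      intro ε hε
      obtain ⟨k, hk⟩ : ∃ k, dist (p x) (u k) < ε := by
        obtain ⟨y, ⟨k, rfl⟩, hy⟩ := hsd.exists_dist_lt (p x) hε
        exact ⟨k, hy⟩
      refine ⟨k, fun n hn => ?_⟩
      have h0 : (0:ℝ) ≤ min 1 (Metric.infDist (p x) (D n)) :=
        le_min zero_le_one Metric.infDist_nonneg
      rw [Real.dist_eq, sub_zero, abs_of_nonneg h0]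
      calc min 1 (Metric.infDist (p x) (D n)) ≤ Metric.infDist (p x) (D n) :=
            min_le_right _ _
        _ ≤ dist (p x) (u k) := Metric.infDist_le_dist_of_mem ⟨k, hn, rfl⟩
        _ < ε := hk
    · intro A hA hU
      have htb : TotallyBounded (p '' A) := by
        rw [Metric.totallyBounded_iff]
        intro ε hε
        have hε' : (0:ℝ) < min ε (1/2) := lt_min hε (by norm_num)
        obtain ⟨N, hN⟩ := (Metric.tendstoUniformlyOn_iff.1 hU (min ε (1/2)) hε') |>.exists
        refine ⟨D N, hDfin N, ?_⟩
        rintro y ⟨x, hxA, rfl⟩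
        have h1 := hN x hxA
        rw [Real.dist_eq] at h1
        have h2 : min 1 (Metric.infDist (p x) (D N)) < min ε (1/2) := by
          have := abs_sub_abs_le_abs_sub (0:ℝ) (min 1 (Metric.infDist (p x) (D N)))
          have h0 : (0:ℝ) ≤ min 1 (Metric.infDist (p x) (D N)) :=
            le_min zero_le_one Metric.infDist_nonneg
          calc min 1 (Metric.infDist (p x) (D N))
              = |0 - min 1 (Metric.infDist (p x) (D N))| := by
                rw [zero_sub, abs_neg, abs_of_nonneg h0]
            _ < min ε (1/2) := h1
        have h3 : Metric.infDist (p x) (D N) < min ε (1/2) := by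
          rcases min_cases 1 (Metric.infDist (p x) (D N)) with ⟨heq, hle⟩ | ⟨heq, hle⟩
          · exfalso
            rw [heq] at h2
            have := min_le_right ε (1/2)
            linarith
          · rwa [heq] at h2
        obtain ⟨z, hzD, hz⟩ := (Metric.infDist_lt_iff (hDne N)).1 h3
        exact Set.mem_biUnion hzD (Metric.mem_ball.2 (hz.trans_le (min_le_left _ _)))
      have hK : IsCompact (closure (p '' A)) :=
        htb.closure.isCompact_of_isClosed isClosed_closure
      have hsub : A ⊆ p ⁻¹' closure (p '' A) := fun x hx =>
        subset_closure (Set.mem_image_of_mem p hx)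
      exact (hpk _ hK).of_isClosed_subset hA hsub
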